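/- For every $k \geq 1$, every group homomorphism from $SL_2(\mathbb{Z}/5)$ to the general linear group $GL_2(\mathbb{Z}/3^k)$ of invertible $2 \times 2$ matrices over $\mathbb{Z}/3^k$ is trivial. -/

import Mathlib

lemma cube_expand {R : Type*} [Ring R] (w : R) :
    (1+w)^3 = 1 + ((3:ℕ):R)*w + ((3:ℕ):R)*w^2 + w^3 := by
  have h1 : ((3:ℕ):R)*w = 3 • w := by simp [nsmul_eq_mul]
  have h2 : ((3:ℕ):R)*w^2 = 3 • (w*w) := by simp [nsmul_eq_mul, pow_two, mul_assoc]
  rw [h1, h2]; noncomm_ring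

lemma pow3_lift {R : Type*} [Ring R] (y : R) (m : ℕ) :
    ∃ z : R, (1 + ((3:ℕ):R) * y)^(3^m) = 1 + ((3:ℕ):R)^(m+1) * z := by
  induction m with
  | zero => exact ⟨y, by simp⟩
  | succ m ih =>
    obtain ⟨z, hz⟩ := ih
    set c : R := ((3:ℕ):R) with hc
    have hcz : Commute (c^(m+1)) z := (Nat.cast_commute 3 z).pow_left (m+1)
    refine ⟨z + c^(m+1) * z^2 + c^(2*m+1) * z^3, ?_⟩
    have h3 : (3:ℕ)^(m+1) = 3^m*3 := pow_succ 3 m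
    rw [h3, pow_mul, hz, cube_expand]
    have e1 : c * (c^(m+1) * z) = c^(m+1+1) * z := by
      rw [← mul_assoc, ← pow_succ']
    have exp2 : (m+1)*2+1 = (m+1+1)+(m+1) := by ring
    have e2 : c * (c^(m+1) * z)^2 = c^(m+1+1) * (c^(m+1) * z^2) := by
      calc c * (c^(m+1)*z)^2
          = c * ((c^(m+1))^2 * z^2) := by rw [hcz.mul_pow]
        _ = c^((m+1)*2+1) * z^2 := by rw [← pow_mul, ← mul_assoc, ← pow_succ']
        _ = c^((m+1+1)+(m+1)) * z^2 := by rw [exp2]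
        _ = c^(m+1+1) * (c^(m+1) * z^2) := by rw [pow_add, mul_assoc]
    have exp3 : (m+1)*3 = (m+1+1)+(2*m+1) := by ring
    have e3 : (c^(m+1) * z)^3 = c^(m+1+1) * (c^(2*m+1) * z^3) := by
      calc (c^(m+1)*z)^3
          = (c^(m+1))^3 * z^3 := hcz.mul_pow 3
        _ = c^((m+1)*3) * z^3 := by rw [← pow_mul]
        _ = c^((m+1+1)+(2*m+1)) * z^3 := by rw [exp3]
        _ = c^(m+1+1) * (c^(2*m+1) * z^3) := by rw [pow_add, mul_assoc]
    rw [e1, e2, e3, mul_add, mul_add]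
    abel

set_option maxHeartbeats 4000000 in
set_option maxRecDepth 10000 in
lemma GL2_ZMod3_five_torsion (z : Matrix.GeneralLinearGroup (Fin 2) (ZMod 3)) :
    z^5 = 1 → z = 1 := by revert z; decide

lemma ZMod_three_dvd (k : ℕ) (hk : 1 ≤ k) (a : ZMod (3^k))
    (ha : ZMod.castHom (dvd_pow_self 3 (Nat.one_le_iff_ne_zero.mp hk)) (ZMod 3) a = 0) :
    ∃ b : ZMod (3^k), a = 3 * b := by
  haveI : NeZero (3^k) := ⟨pow_ne_zero k (by norm_num)⟩
  rw [ZMod.castHom_apply, ← ZMod.natCast_val, ZMod.natCast_eq_zero_iff] at ha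
  obtain ⟨c, hc⟩ := ha
  refine ⟨(c : ZMod (3^k)), ?_⟩
  have h1 : ((ZMod.val a : ℕ) : ZMod (3^k)) = a := ZMod.natCast_rightInverse a
  rw [← h1, hc]
  push_cast
  ring

lemma GL2_five_torsion_trivial (k : ℕ) (hk : 1 ≤ k)
    (x : Matrix.GeneralLinearGroup (Fin 2) (ZMod (3^k))) (hx : x^5 = 1) : x = 1 := by
  haveI : NeZero (3^k) := ⟨pow_ne_zero k (by norm_num)⟩
  set R := Matrix (Fin 2) (Fin 2) (ZMod (3^k)) with hR
  let ρ := ZMod.castHom (dvd_pow_self 3 (Nat.one_le_iff_ne_zero.mp hk)) (ZMod 3)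
  let π : R →+* Matrix (Fin 2) (Fin 2) (ZMod 3) := ρ.mapMatrix
  let Φ : Matrix.GeneralLinearGroup (Fin 2) (ZMod (3^k)) →*
      Matrix.GeneralLinearGroup (Fin 2) (ZMod 3) := Units.map π.toMonoidHom
  have hΦx : Φ x = 1 := by
    apply GL2_ZMod3_five_torsion
    rw [← map_pow, hx, map_one]
  have hentry : ∀ i j, ∃ b, (x : R) i j - (1 : R) i j = 3 * b := by
    intro i j
    apply ZMod_three_dvd k hk
    have h1 : π (x : R) = 1 := congrArg Units.val hΦx
    have h2 : ρ ((x : R) i j) = (1 : Matrix (Fin 2) (Fin 2) (ZMod 3)) i j := by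
      conv_rhs => rw [← h1]
      rfl
    have h3 : ρ ((1 : R) i j) = (1 : Matrix (Fin 2) (Fin 2) (ZMod 3)) i j := by
      have h4 : π (1 : R) = 1 := map_one π
      conv_rhs => rw [← h4]
      rfl
    rw [map_sub, h2, h3, sub_self]
  choose y hy using hentry
  have hxy : (x : R) = 1 + ((3:ℕ):R) * (Matrix.of y) := by
    ext i j
    have := hy i j
    rw [sub_eq_iff_eq_add] at this
    rw [Matrix.add_apply, ← nsmul_eq_mul, Matrix.smul_apply, this]
    simp only [Matrix.of_apply]
    push_cast
    ring
  obtain ⟨z, hz⟩ := pow3_lift (Matrix.of y) (k-1)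
  have hk1 : k - 1 + 1 = k := Nat.succ_pred_eq_of_pos hk
  have hck : ((3:ℕ):R)^k = 0 := by
    rw [← Nat.cast_pow]
    have h5 : ((3^k : ℕ) : ZMod (3^k)) = 0 := ZMod.natCast_self _
    calc ((3^k : ℕ) : R) = algebraMap (ZMod (3^k)) R ((3^k : ℕ) : ZMod (3^k)) := by
          rw [map_natCast]
      _ = 0 := by rw [h5, map_zero]
  have hpow : (x : R) ^ (3^(k-1)) = 1 := by
    rw [hxy, hz, hk1, hck, zero_mul, add_zero]
  have hxunit : x ^ (3^(k-1)) = 1 := by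
    apply Units.ext
    rw [Units.val_pow_eq_pow_val, Units.val_one]
    exact hpow
  have h5 : orderOf x ∣ 5 := orderOf_dvd_of_pow_eq_one hx
  have h3d : orderOf x ∣ 3^(k-1) := orderOf_dvd_of_pow_eq_one hxunit
  have hcop : Nat.Coprime 5 (3^(k-1)) := Nat.Coprime.pow_right _ (by decide)
  have hdvd1 : orderOf x ∣ 1 := hcop ▸ Nat.dvd_gcd h5 h3d
  exact orderOf_eq_one_iff.mp (Nat.dvd_one.mp hdvd1)

open Matrix in
lemma transvection01 (c : ZMod 5) :
    Matrix.transvection (0:Fin 2) (1:Fin 2) c = !![1,c;0,1] := by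
  ext i j
  fin_cases i <;> fin_cases j <;>
    simp [Matrix.transvection, Matrix.single, Matrix.one_apply]

open Matrix in
lemma transvection10 (c : ZMod 5) :
    Matrix.transvection (1:Fin 2) (0:Fin 2) c = !![1,0;c,1] := by
  ext i j
  fin_cases i <;> fin_cases j <;>
    simp [Matrix.transvection, Matrix.single, Matrix.one_apply]

open Matrix in
lemma diag_as_transvections (a b : ZMod 5) (h : a * b = 1) :
    (Matrix.diagonal ![a, b] : Matrix (Fin 2) (Fin 2) (ZMod 5)) =
      transvection 0 1 a * transvection 1 0 (-b) * transvection 0 1 a *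
      transvection 0 1 (-1) * transvection 1 0 1 * transvection 0 1 (-1) := by
  simp only [transvection01, transvection10, Matrix.mul_fin_two]
  ext i j
  fin_cases i <;> fin_cases j <;> simp [Matrix.diagonal]
  · linear_combination a * h
  · linear_combination -h
  · linear_combination h
  · ring

lemma transvection_pow5 {i j : Fin 2} (hij : i ≠ j) (c : ZMod 5) :
    Matrix.transvection i j c ^ 5 = 1 := by
  have hm : ∀ d e : ZMod 5, Matrix.transvection i j d * Matrix.transvection i j e =
      Matrix.transvection i j (d + e) := fun d e => Matrix.transvection_mul_transvection_same i j hij d e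
  have h5 : Matrix.transvection i j c ^ 5 = Matrix.transvection i j (c+c+c+c+c) := by
    rw [pow_succ, pow_succ, pow_succ, pow_succ, pow_one, hm, hm, hm, hm]
  have hc : c + c + c + c + c = 0 := by
    have h0 : (5 : ZMod 5) * c = 0 := by
      rw [show (5:ZMod 5) = 0 from rfl, zero_mul]
    linear_combination h0
  rw [h5, hc, Matrix.transvection_zero]

/-- The SL₂ element attached to a transvection structure. -/
def sltv (t : Matrix.TransvectionStruct (Fin 2) (ZMod 5)) :
    Matrix.SpecialLinearGroup (Fin 2) (ZMod 5) := ⟨t.toMatrix, t.det⟩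

lemma sltv_pow5 (t : Matrix.TransvectionStruct (Fin 2) (ZMod 5)) : sltv t ^ 5 = 1 := by
  apply Subtype.ext
  rw [Matrix.SpecialLinearGroup.coe_pow]
  obtain ⟨i, j, hij, c⟩ := t
  show Matrix.transvection i j c ^ 5 = _
  rw [transvection_pow5 hij, Matrix.SpecialLinearGroup.coe_one]

/-- Coercion from SL₂ to the matrix ring, as a monoid hom. -/
def slCoeHom : Matrix.SpecialLinearGroup (Fin 2) (ZMod 5) →* Matrix (Fin 2) (Fin 2) (ZMod 5) where
  toFun g := g
  map_one' := Matrix.SpecialLinearGroup.coe_one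
  map_mul' a b := Matrix.SpecialLinearGroup.coe_mul a b

lemma sl_list_prod_coe (L : List (Matrix.TransvectionStruct (Fin 2) (ZMod 5))) :
    ((L.map sltv).prod : Matrix (Fin 2) (Fin 2) (ZMod 5)) =
      (L.map Matrix.TransvectionStruct.toMatrix).prod := by
  have h1 : ((L.map sltv).prod : Matrix (Fin 2) (Fin 2) (ZMod 5)) =
      slCoeHom ((L.map sltv).prod) := rfl
  rw [h1, map_list_prod, List.map_map]
  congr 1

/-- For every `k ≥ 1`, every group homomorphism from `SL₂(ℤ/5)` to
`GL₂(ℤ/3^k)` is trivial. -/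
theorem SL2_ZMod5_hom_to_GL2_ZMod3pow_trivial
    (k : ℕ) (hk : 1 ≤ k)
    (f : Matrix.SpecialLinearGroup (Fin 2) (ZMod 5) →*
      Matrix.GeneralLinearGroup (Fin 2) (ZMod (3 ^ k))) : f = 1 := by
  have htv : ∀ t : Matrix.TransvectionStruct (Fin 2) (ZMod 5), sltv t ∈ f.ker := by
    intro t
    rw [MonoidHom.mem_ker]
    apply GL2_five_torsion_trivial k hk
    rw [← map_pow, sltv_pow5, map_one]
  haveI : Fact (Nat.Prime 5) := ⟨by norm_num⟩
  refine MonoidHom.ext fun g => ?_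
  rw [MonoidHom.one_apply, ← MonoidHom.mem_ker]
  obtain ⟨L, L', D, hM⟩ := Matrix.Pivot.exists_list_transvec_mul_diagonal_mul_list_transvec
    (g : Matrix (Fin 2) (Fin 2) (ZMod 5))
  have hdetD : (Matrix.diagonal D).det = 1 := by
    have hdet := congrArg Matrix.det hM
    rw [Matrix.SpecialLinearGroup.det_coe, Matrix.det_mul, Matrix.det_mul,
      Matrix.TransvectionStruct.det_toMatrix_prod, Matrix.TransvectionStruct.det_toMatrix_prod,
      one_mul, mul_one] at hdet
    exact hdet.symm
  have haD : D 0 * D 1 = 1 := by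
    rw [Matrix.det_diagonal, Fin.prod_univ_two] at hdetD
    exact hdetD
  have hDe : D = ![D 0, D 1] := by
    funext i; fin_cases i <;> rfl
  let t1 : Matrix.TransvectionStruct (Fin 2) (ZMod 5) := ⟨0, 1, by decide, D 0⟩
  let t2 : Matrix.TransvectionStruct (Fin 2) (ZMod 5) := ⟨1, 0, by decide, -(D 1)⟩
  let t4 : Matrix.TransvectionStruct (Fin 2) (ZMod 5) := ⟨0, 1, by decide, -1⟩
  let t5 : Matrix.TransvectionStruct (Fin 2) (ZMod 5) := ⟨1, 0, by decide, 1⟩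
  have hprod : (⟨Matrix.diagonal D, hdetD⟩ :
      Matrix.SpecialLinearGroup (Fin 2) (ZMod 5)) =
      sltv t1 * sltv t2 * sltv t1 * sltv t4 * sltv t5 * sltv t4 := by
    apply Subtype.ext
    simp only [Matrix.SpecialLinearGroup.coe_mul]
    show Matrix.diagonal D = Matrix.TransvectionStruct.toMatrix t1 * _ * _ * _ * _ * _
    simp only [Matrix.TransvectionStruct.toMatrix_mk, t1, t2, t4, t5]
    rw [hDe]
    exact diag_as_transvections (D 0) (D 1) haD
  have hdmem : (⟨Matrix.diagonal D, hdetD⟩ :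
      Matrix.SpecialLinearGroup (Fin 2) (ZMod 5)) ∈ f.ker := by
    rw [hprod]
    exact mul_mem (mul_mem (mul_mem (mul_mem (mul_mem (htv t1) (htv t2)) (htv t1))
      (htv t4)) (htv t5)) (htv t4)
  have hLmem : ∀ L₀ : List (Matrix.TransvectionStruct (Fin 2) (ZMod 5)),
      (L₀.map sltv).prod ∈ f.ker := by
    intro L₀
    apply Subgroup.list_prod_mem
    intro x hx
    obtain ⟨t, _, rfl⟩ := List.mem_map.mp hx
    exact htv t
  have hg : g = (L.map sltv).prod * ⟨Matrix.diagonal D, hdetD⟩ * (L'.map sltv).prod := by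
    apply Subtype.ext
    simp only [Matrix.SpecialLinearGroup.coe_mul, sl_list_prod_coe]
    rw [← sl_list_prod_coe L] at hM
    exact hM
  rw [hg]
  exact mul_mem (mul_mem (hLmem L) hdmem) (hLmem L')
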